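/- arXiv:1602.05703 — 5 statements merged into one kernel-verified Lean document; each statement's English description precedes it below -/
import Mathlib

section
/- Let B and D be orthogonal projections on ℂ^N. There exists a nonzero vector x with Bx = x and Dx = x if and only if ‖BD‖ = 1, where ‖·‖ is the spectral norm. -/
open Matrix
open scoped Matrix.Norms.L2Operator

section Aux
open ContinuousLinearMap
open scoped InnerProductSpace

variable {N : ℕ}

lemma proj_pythagoras (P : EuclideanSpace ℂ (Fin N) →L[ℂ] EuclideanSpace ℂ (Fin N))
    (hP : P ∘L P = P) (hsa : ContinuousLinearMap.adjoint P = P)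
    (y : EuclideanSpace ℂ (Fin N)) :
    ‖P y‖ ^ 2 + ‖y - P y‖ ^ 2 = ‖y‖ ^ 2 := by
  have hPP : P (P y) = P y := by simpa using DFunLike.congr_fun hP y
  have horth : ⟪P y, y - P y⟫_ℂ = 0 := by
    have key := ContinuousLinearMap.adjoint_inner_left P (y - P y) y
    rw [hsa] at key
    rw [key, map_sub, hPP, sub_self, inner_zero_right]
  have := norm_add_sq (𝕜 := ℂ) (P y) (y - P y)
  simp [horth] at this
  linarith

lemma proj_norm_le (P : EuclideanSpace ℂ (Fin N) →L[ℂ] EuclideanSpace ℂ (Fin N))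
    (hP : P ∘L P = P) (hsa : ContinuousLinearMap.adjoint P = P)
    (y : EuclideanSpace ℂ (Fin N)) : ‖P y‖ ≤ ‖y‖ := by
  have h := proj_pythagoras P hP hsa y
  nlinarith [sq_nonneg ‖y - P y‖, norm_nonneg (P y), norm_nonneg y]

lemma proj_fixed_of_norm_eq (P : EuclideanSpace ℂ (Fin N) →L[ℂ] EuclideanSpace ℂ (Fin N))
    (hP : P ∘L P = P) (hsa : ContinuousLinearMap.adjoint P = P)
    (y : EuclideanSpace ℂ (Fin N)) (h : ‖P y‖ = ‖y‖) : P y = y := by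
  have hpy := proj_pythagoras P hP hsa y
  have hsq : ‖y - P y‖ ^ 2 = 0 := by rw [h] at hpy; linarith
  have : ‖y - P y‖ = 0 := by
    have := pow_eq_zero_iff (n := 2) (by norm_num) |>.mp hsq
    exact this
  have := norm_eq_zero.mp this
  have : y = P y := by linear_combination (norm := module) this
  exact this.symm

lemma norm_attained (hN : 0 < N) (T : EuclideanSpace ℂ (Fin N) →L[ℂ] EuclideanSpace ℂ (Fin N)) :
    ∃ x : EuclideanSpace ℂ (Fin N), ‖x‖ = 1 ∧ ‖T x‖ = ‖T‖ := by
  haveI : Nontrivial (EuclideanSpace ℂ (Fin N)) :=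
    nontrivial_of_ne (EuclideanSpace.single ⟨0, hN⟩ (1 : ℂ)) 0 (by
      intro hcontra
      have := congrArg norm hcontra
      rw [EuclideanSpace.norm_single] at this
      simp at this)
  obtain ⟨x₀, hx₀mem, hmax⟩ := (isCompact_sphere (0 : EuclideanSpace ℂ (Fin N)) 1).exists_isMaxOn
    (NormedSpace.sphere_nonempty.mpr zero_le_one)
    (T.continuous.norm).continuousOn
  rw [mem_sphere_zero_iff_norm] at hx₀mem
  refine ⟨x₀, hx₀mem, le_antisymm (T.le_opNorm x₀ |>.trans (by rw [hx₀mem, mul_one])) ?_⟩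
  refine T.opNorm_le_bound (norm_nonneg _) fun x => ?_
  rcases eq_or_ne x 0 with rfl | hx
  · simp
  · have hxn : ‖x‖ ≠ 0 := norm_ne_zero_iff.mpr hx
    have hxpos : (0:ℝ) < ‖x‖ := lt_of_le_of_ne (norm_nonneg x) (Ne.symm hxn)
    set u : EuclideanSpace ℂ (Fin N) := ‖x‖⁻¹ • x with hu
    have hun : ‖u‖ = 1 := by
      rw [hu, norm_smul, norm_inv, norm_norm, inv_mul_cancel₀ hxn]
    have hle := hmax (mem_sphere_zero_iff_norm.mpr hun)
    simp only [Set.mem_setOf_eq] at hle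
    have hTu : ‖T u‖ = ‖x‖⁻¹ * ‖T x‖ := by
      rw [hu, T.map_smul_of_tower, norm_smul, norm_inv, norm_norm]
    rw [hTu] at hle
    have := mul_le_mul_of_nonneg_left hle (le_of_lt hxpos)
    rw [← mul_assoc, mul_inv_cancel₀ hxn, one_mul] at this
    linarith [this]

end Aux

/-- For orthogonal projections `B`, `D` on `ℂ^N`, there is a nonzero `x`
with `Bx = x` and `Dx = x` iff the spectral norm of `B * D` equals one. -/
theorem perfectly_localized_iff_opNorm_eq_one {N : ℕ}
    (B D : Matrix (Fin N) (Fin N) ℂ)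
    (hBidem : B * B = B) (hBherm : Bᴴ = B)
    (hDidem : D * D = D) (hDherm : Dᴴ = D) :
    (∃ x : Fin N → ℂ, x ≠ 0 ∧ B *ᵥ x = x ∧ D *ᵥ x = x) ↔ ‖B * D‖ = 1 := by
  classical
  set TB := Matrix.toEuclideanCLM (𝕜 := ℂ) (n := Fin N) B with hTB
  set TD := Matrix.toEuclideanCLM (𝕜 := ℂ) (n := Fin N) D with hTD
  have hTBidem : TB ∘L TB = TB := by
    rw [← ContinuousLinearMap.mul_def, hTB, ← _root_.map_mul, hBidem]
  have hTDidem : TD ∘L TD = TD := by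
    rw [← ContinuousLinearMap.mul_def, hTD, ← _root_.map_mul, hDidem]
  have hTBadj : ContinuousLinearMap.adjoint TB = TB := by
    rw [← ContinuousLinearMap.star_eq_adjoint, hTB, ← map_star]
    congr 1
  have hTDadj : ContinuousLinearMap.adjoint TD = TD := by
    rw [← ContinuousLinearMap.star_eq_adjoint, hTD, ← map_star]
    congr 1
  have hnorm : ‖B * D‖ = ‖TB ∘L TD‖ := by
    rw [Matrix.cstar_norm_def, _root_.map_mul, ContinuousLinearMap.mul_def]
  have hBapp : ∀ x : Fin N → ℂ,
      TB ((WithLp.equiv 2 (Fin N → ℂ)).symm x) = (WithLp.equiv 2 (Fin N → ℂ)).symm (B *ᵥ x) := by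
    intro x
    rw [hTB]; exact Matrix.toEuclideanCLM_toLp B x
  have hDapp : ∀ x : Fin N → ℂ,
      TD ((WithLp.equiv 2 (Fin N → ℂ)).symm x) = (WithLp.equiv 2 (Fin N → ℂ)).symm (D *ᵥ x) := by
    intro x
    rw [hTD]; exact Matrix.toEuclideanCLM_toLp D x
  constructor
  · rintro ⟨x, hx0, hBx, hDx⟩
    set y : EuclideanSpace ℂ (Fin N) := (WithLp.equiv 2 (Fin N → ℂ)).symm x with hy
    have hy0 : y ≠ 0 := fun hzero => hx0 (by simpa [hy] using congrArg (WithLp.equiv 2 (Fin N → ℂ)) hzero)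
    have hyn : (0:ℝ) < ‖y‖ := norm_pos_iff.mpr hy0
    have hfix : (TB ∘L TD) y = y := by
      rw [ContinuousLinearMap.comp_apply, hy, hDapp, hDx, hBapp, hBx]
    refine le_antisymm ?_ ?_
    · rw [hnorm]
      refine ContinuousLinearMap.opNorm_le_bound _ zero_le_one fun z => ?_
      rw [one_mul, ContinuousLinearMap.comp_apply]
      exact (proj_norm_le TB hTBidem hTBadj (TD z)).trans (proj_norm_le TD hTDidem hTDadj z)
    · rw [hnorm]
      have hle := (TB ∘L TD).le_opNorm y
      rw [hfix] at hle
      have h2 : 1 * ‖y‖ ≤ ‖TB ∘L TD‖ * ‖y‖ := by rw [one_mul]; exact hle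
      exact le_of_mul_le_mul_right h2 hyn
  · intro h
    have hN : 0 < N := by
      by_contra hc
      push_neg at hc
      interval_cases N
      have : B * D = 0 := Subsingleton.elim _ _
      rw [this, norm_zero] at h
      norm_num at h
    obtain ⟨x₀, hx₀, hmax⟩ := norm_attained hN (TB ∘L TD)
    rw [← hnorm, h] at hmax
    have hcomp : ‖TB (TD x₀)‖ = 1 := by rwa [ContinuousLinearMap.comp_apply] at hmax
    have h1 : ‖TB (TD x₀)‖ ≤ ‖TD x₀‖ := proj_norm_le TB hTBidem hTBadj (TD x₀)
    have h2 : ‖TD x₀‖ ≤ ‖x₀‖ := proj_norm_le TD hTDidem hTDadj x₀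
    have hDnorm : ‖TD x₀‖ = 1 := le_antisymm (by rw [← hx₀]; exact h2) (by rw [← hcomp]; exact h1)
    have hDfix : TD x₀ = x₀ := proj_fixed_of_norm_eq TD hTDidem hTDadj x₀ (by rw [hDnorm, hx₀])
    have hBfix : TB x₀ = x₀ := by
      have : ‖TB x₀‖ = ‖x₀‖ := by rw [← hDfix, hcomp, hDnorm]
      exact proj_fixed_of_norm_eq TB hTBidem hTBadj x₀ this
    refine ⟨WithLp.equiv 2 (Fin N → ℂ) x₀, ?_, ?_, ?_⟩
    · intro hc
      have : x₀ = 0 := (WithLp.equiv 2 (Fin N → ℂ)).injective (by simpa using hc)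
      rw [this, norm_zero] at hx₀
      norm_num at hx₀
    · have := hBapp (WithLp.equiv 2 (Fin N → ℂ) x₀)
      rw [Equiv.symm_apply_apply, hBfix] at this
      exact (WithLp.equiv 2 (Fin N → ℂ)).symm.injective
        (this.symm.trans (Equiv.symm_apply_apply _ _).symm)
    · have := hDapp (WithLp.equiv 2 (Fin N → ℂ) x₀)
      rw [Equiv.symm_apply_apply, hDfix] at this
      exact (WithLp.equiv 2 (Fin N → ℂ)).symm.injective
        (this.symm.trans (Equiv.symm_apply_apply _ _).symm)
end

section
/- Let B and D be orthogonal projections on ℂ^N with D̄ = I − D. If ‖D̄ B‖ < 1, then any vector x₀ with B x₀ = x₀ is uniquely determined among band-limited vectors by its samples D x₀; that is, if B x₀ = x₀, B x₁ = x₁ and D x₀ = D x₁, then x₀ = x₁. -/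
open Matrix
open scoped Matrix.Norms.L2Operator

/-- For orthogonal projections `B`, `D` on `ℂ^N` with `D̄ = I - D`,
if `‖(I - D) * B‖ < 1`, then band-limited vectors are uniquely determined by their
samples: `Bx₀ = x₀`, `Bx₁ = x₁` and `Dx₀ = Dx₁` imply `x₀ = x₁`. -/
theorem bandlimited_unique_of_samples {N : ℕ}
    (B D : Matrix (Fin N) (Fin N) ℂ)
    (hBidem : B * B = B) (hBherm : Bᴴ = B)
    (hDidem : D * D = D) (hDherm : Dᴴ = D)
    (h : ‖(1 - D) * B‖ < 1) :
    ∀ x₀ x₁ : Fin N → ℂ, B *ᵥ x₀ = x₀ → B *ᵥ x₁ = x₁ → D *ᵥ x₀ = D *ᵥ x₁ →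
      x₀ = x₁ := by
  intro x₀ x₁ h0 h1 hD
  set e : EuclideanSpace ℂ (Fin N) := WithLp.toLp 2 (x₀ - x₁) with he
  have hBe : B *ᵥ e = e := by
    show B *ᵥ (x₀ - x₁) = x₀ - x₁
    rw [Matrix.mulVec_sub, h0, h1]
  have hDe : D *ᵥ e = 0 := by
    show D *ᵥ (x₀ - x₁) = 0
    rw [Matrix.mulVec_sub, hD, sub_self]
  have key : ((1 - D) * B) *ᵥ e = e := by
    rw [← Matrix.mulVec_mulVec, hBe, Matrix.sub_mulVec, Matrix.one_mulVec, hDe, sub_zero]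
  have hnorm : ‖e‖ ≤ ‖(1 - D) * B‖ * ‖e‖ := by
    have := Matrix.l2_opNorm_mulVec ((1 : Matrix (Fin N) (Fin N) ℂ) - D * B) e
    have h2 := Matrix.l2_opNorm_mulVec ((1 - D) * B) e
    rw [key] at h2
    exact h2
  have hezero : e = 0 := by
    by_contra hne
    have hpos : 0 < ‖e‖ := norm_pos_iff.mpr hne
    nlinarith [hnorm, mul_lt_mul_of_pos_right h hpos]
  have : x₀ - x₁ = 0 := congrArg WithLp.ofLp hezero
  exact sub_eq_zero.mp this
end

section
/- Let B and D be orthogonal projections on ℂ^N with D̄ = I − D. If ‖D̄ B‖ = 1, then there exists a nonzero band-limited vector x (Bx = x) with Dx = 0; hence reconstruction of band-limited signals from samples on D fails. -/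
open Matrix
open scoped Matrix.Norms.L2Operator

noncomputable section

/-- The vector `v : Fin N → ℂ` viewed in `EuclideanSpace`. -/
private def eE {N : ℕ} (v : Fin N → ℂ) : EuclideanSpace ℂ (Fin N) :=
  (WithLp.equiv 2 (Fin N → ℂ)).symm v

private lemma eE_sub {N : ℕ} (v w : Fin N → ℂ) : eE (v - w) = eE v - eE w := rfl

/-- Pythagoras for a Hermitian idempotent: `‖v‖² = ‖Pv‖² + ‖v - Pv‖²`. -/
private lemma proj_pythagoras_s5 {N : ℕ} (P : Matrix (Fin N) (Fin N) ℂ)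
    (hidem : P * P = P) (hherm : Pᴴ = P) (v : Fin N → ℂ) :
    ‖eE v‖ ^ 2 = ‖eE (P *ᵥ v)‖ ^ 2 + ‖eE (v - P *ᵥ v)‖ ^ 2 := by
  have hinner : (inner ℂ (eE (P *ᵥ v)) (eE (v - P *ᵥ v)) : ℂ) = 0 := by
    rw [eE, eE, WithLp.equiv_symm_apply, EuclideanSpace.inner_toLp_toLp, dotProduct_comm]
    have : star (P *ᵥ v) ⬝ᵥ (v - P *ᵥ v) = star v ⬝ᵥ (P *ᵥ (v - P *ᵥ v)) := by
      rw [star_mulVec, hherm, ← dotProduct_mulVec]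
    rw [this]
    have : P *ᵥ (v - P *ᵥ v) = 0 := by
      rw [mulVec_sub, mulVec_mulVec, hidem, sub_self]
    rw [this, dotProduct_zero]
  have := norm_add_sq_eq_norm_sq_add_norm_sq_of_inner_eq_zero _ _ hinner
  have hsum : eE (P *ᵥ v) + eE (v - P *ᵥ v) = eE v := by
    rw [eE_sub]; abel
  rw [hsum] at this
  linarith

private lemma proj_contract {N : ℕ} (P : Matrix (Fin N) (Fin N) ℂ)
    (hidem : P * P = P) (hherm : Pᴴ = P) (v : Fin N → ℂ) :
    ‖eE (P *ᵥ v)‖ ≤ ‖eE v‖ := by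
  have := proj_pythagoras_s5 P hidem hherm v
  nlinarith [norm_nonneg (eE (v - P *ᵥ v)), norm_nonneg (eE (P *ᵥ v)), norm_nonneg (eE v)]

private lemma proj_fix {N : ℕ} (P : Matrix (Fin N) (Fin N) ℂ)
    (hidem : P * P = P) (hherm : Pᴴ = P) (v : Fin N → ℂ)
    (hn : ‖eE (P *ᵥ v)‖ = ‖eE v‖) : P *ᵥ v = v := by
  have := proj_pythagoras_s5 P hidem hherm v
  rw [hn] at this
  have h0 : ‖eE (v - P *ᵥ v)‖ = 0 := by nlinarith [norm_nonneg (eE (v - P *ᵥ v))]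
  have : eE (v - P *ᵥ v) = 0 := norm_eq_zero.mp h0
  have : v - P *ᵥ v = 0 := (WithLp.equiv 2 (Fin N → ℂ)).symm.injective this
  linear_combination -this

end

/-- For orthogonal projections `B`, `D` on `ℂ^N` with `D̄ = I - D`,
if `‖(I - D) * B‖ = 1`, then there is a nonzero band-limited vector `x` (`Bx = x`)
with `Dx = 0`, so reconstruction of band-limited signals from samples on `D` fails. -/
theorem exists_bandlimited_vanishing_on_samples {N : ℕ}
    (B D : Matrix (Fin N) (Fin N) ℂ)
    (hBidem : B * B = B) (hBherm : Bᴴ = B)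
    (hDidem : D * D = D) (hDherm : Dᴴ = D)
    (h : ‖(1 - D) * B‖ = 1) :
    ∃ x : Fin N → ℂ, x ≠ 0 ∧ B *ᵥ x = x ∧ D *ᵥ x = 0 := by
  classical
  set A : Matrix (Fin N) (Fin N) ℂ := (1 - D) * B with hA
  set f := Matrix.toEuclideanCLM (n := Fin N) (𝕜 := ℂ) A with hf
  have hfn : ‖f‖ = 1 := h
  -- attain the norm on the closed unit ball
  obtain ⟨x₀, hx₀mem, hx₀⟩ :=
    (isCompact_closedBall (0 : EuclideanSpace ℂ (Fin N)) 1).exists_sSup_image_eq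
      (Metric.nonempty_closedBall.mpr zero_le_one)
      ((f.continuous.norm).continuousOn)
  rw [f.sSup_unitClosedBall_eq_norm, hfn] at hx₀
  -- `v` : the underlying plain vector
  set v : Fin N → ℂ := WithLp.equiv 2 (Fin N → ℂ) x₀ with hv
  have hx₀v : x₀ = eE v := rfl
  have hfx₀ : f x₀ = eE (A *ᵥ v) := by
    apply (WithLp.equiv 2 (Fin N → ℂ)).injective
    have hh := Matrix.ofLp_toEuclideanCLM (𝕜 := ℂ) A x₀
    rw [eE, Equiv.apply_symm_apply]
    exact hh
  have hDbar_idem : (1 - D) * (1 - D) = 1 - D := by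
    rw [mul_sub, sub_mul, sub_mul, hDidem]; noncomm_ring
  have hDbar_herm : (1 - D)ᴴ = 1 - D := by
    rw [conjTranspose_sub, hDherm, conjTranspose_one]
  have hAv : A *ᵥ v = (1 - D) *ᵥ (B *ᵥ v) := by rw [hA, ← mulVec_mulVec]
  have hnv1 : ‖eE v‖ ≤ 1 := by
    simpa [hx₀v] using Metric.mem_closedBall.mp hx₀mem
  have key1 : ‖eE (A *ᵥ v)‖ = 1 := by rw [← hfx₀]; exact hx₀.symm
  have hc1 : ‖eE (A *ᵥ v)‖ ≤ ‖eE (B *ᵥ v)‖ := by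
    rw [hAv]; exact proj_contract (1 - D) hDbar_idem hDbar_herm (B *ᵥ v)
  have hc2 : ‖eE (B *ᵥ v)‖ ≤ ‖eE v‖ := proj_contract B hBidem hBherm v
  have hBeq : ‖eE (B *ᵥ v)‖ = ‖eE v‖ := by
    apply le_antisymm hc2
    calc ‖eE v‖ ≤ 1 := hnv1
    _ = ‖eE (A *ᵥ v)‖ := key1.symm
    _ ≤ ‖eE (B *ᵥ v)‖ := hc1
  have hBfix : B *ᵥ v = v := proj_fix B hBidem hBherm v hBeq
  have hDeq : ‖eE ((1 - D) *ᵥ v)‖ = ‖eE v‖ := by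
    have h1 : ‖eE v‖ = 1 := le_antisymm hnv1 (by
      calc (1:ℝ) = ‖eE (A *ᵥ v)‖ := key1.symm
      _ ≤ ‖eE (B *ᵥ v)‖ := hc1
      _ ≤ ‖eE v‖ := hc2)
    rw [h1, ← key1, hAv, hBfix]
  have hDbarfix : (1 - D) *ᵥ v = v := proj_fix (1 - D) hDbar_idem hDbar_herm v hDeq
  have hDv : D *ᵥ v = 0 := by
    have h2 : (1 : Matrix (Fin N) (Fin N) ℂ) *ᵥ v - D *ᵥ v = v := by
      rw [← sub_mulVec]; exact hDbarfix
    rw [one_mulVec] at h2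
    exact sub_eq_self.mp h2
  refine ⟨v, ?_, hBfix, hDv⟩
  intro h0
  have : ‖eE v‖ = 1 := by
    rw [← key1, hAv, hBfix, hDbarfix]
  rw [h0] at this
  simp [eE] at this
end

section
/- Let U_F be an N×k complex matrix with orthonormal columns (U_F^H U_F = I_k) and D a diagonal 0/1 matrix. Then ‖D̄ U_F‖ < 1 (with D̄ = I − D) if and only if the k×k matrix U_F^H D U_F is positive definite (equivalently, has full rank k). -/
open Matrix
open scoped Matrix.Norms.L2Operator ComplexOrder

set_option maxHeartbeats 1000000

private lemma aux_key {N k : ℕ} (B : Matrix (Fin N) (Fin k) ℂ)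
    (M : Matrix (Fin k) (Fin k) ℂ) (h : Bᴴ * B = 1 - M) (x : Fin k → ℂ) :
    star x ⬝ᵥ (M *ᵥ x) =
      ((‖(WithLp.equiv 2 (Fin k → ℂ)).symm x‖ ^ 2
        - ‖(WithLp.equiv 2 (Fin N → ℂ)).symm (B *ᵥ x)‖ ^ 2 : ℝ) : ℂ) := by
  have h1 : star x ⬝ᵥ ((Bᴴ * B) *ᵥ x) = star (B *ᵥ x) ⬝ᵥ (B *ᵥ x) := by
    rw [← mulVec_mulVec, dotProduct_mulVec, ← star_mulVec]
  have h2 : star (B *ᵥ x) ⬝ᵥ (B *ᵥ x)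
      = ((‖(WithLp.equiv 2 (Fin N → ℂ)).symm (B *ᵥ x)‖ : ℂ)) ^ 2 := by
    rw [dotProduct_comm, ← EuclideanSpace.inner_toLp_toLp, inner_self_eq_norm_sq_to_K,
      WithLp.equiv_symm_apply]
    norm_cast
  have h3 : star x ⬝ᵥ x = ((‖(WithLp.equiv 2 (Fin k → ℂ)).symm x‖ : ℂ)) ^ 2 := by
    rw [dotProduct_comm, ← EuclideanSpace.inner_toLp_toLp, inner_self_eq_norm_sq_to_K,
      WithLp.equiv_symm_apply]
    norm_cast
  have h4 : star x ⬝ᵥ ((1 - M) *ᵥ x) = star x ⬝ᵥ x - star x ⬝ᵥ (M *ᵥ x) := by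
    rw [Matrix.sub_mulVec, dotProduct_sub, Matrix.one_mulVec]
  rw [h] at h1
  have h5 : star x ⬝ᵥ (M *ᵥ x) = star x ⬝ᵥ x - star (B *ᵥ x) ⬝ᵥ (B *ᵥ x) := by
    rw [← h1, h4]; ring
  rw [h5, h2, h3]
  push_cast
  ring

private lemma aux_main {N k : ℕ} (B : Matrix (Fin N) (Fin k) ℂ)
    (M : Matrix (Fin k) (Fin k) ℂ) (h : Bᴴ * B = 1 - M) :
    ‖B‖ < 1 ↔ M.PosDef := by
  have hherm : M.IsHermitian := by
    have : M = 1 - Bᴴ * B := by rw [h]; abel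
    rw [Matrix.IsHermitian, this, conjTranspose_sub, conjTranspose_one,
      conjTranspose_mul, conjTranspose_conjTranspose]
  constructor
  · intro hlt
    refine Matrix.PosDef.of_dotProduct_mulVec_pos hherm (fun x hx => ?_)
    have hx' : (WithLp.equiv 2 (Fin k → ℂ)).symm x ≠ 0 := by
      simpa using hx
    have hnx : 0 < ‖(WithLp.equiv 2 (Fin k → ℂ)).symm x‖ := norm_pos_iff.mpr hx'
    have hle : ‖(EuclideanSpace.equiv (Fin N) ℂ).symm <|
        B *ᵥ ((WithLp.equiv 2 (Fin k → ℂ)).symm x)‖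
        ≤ ‖B‖ * ‖(WithLp.equiv 2 (Fin k → ℂ)).symm x‖ :=
      Matrix.l2_opNorm_mulVec B _
    have hlt2 : ‖(WithLp.equiv 2 (Fin N → ℂ)).symm (B *ᵥ x)‖
        < ‖(WithLp.equiv 2 (Fin k → ℂ)).symm x‖ := by
      calc ‖(WithLp.equiv 2 (Fin N → ℂ)).symm (B *ᵥ x)‖
          ≤ ‖B‖ * ‖(WithLp.equiv 2 (Fin k → ℂ)).symm x‖ := hle
        _ < 1 * ‖(WithLp.equiv 2 (Fin k → ℂ)).symm x‖ :=
            mul_lt_mul_of_pos_right hlt hnx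
        _ = ‖(WithLp.equiv 2 (Fin k → ℂ)).symm x‖ := one_mul _
    rw [aux_key B M h x, Complex.zero_lt_real]
    have hBnn : (0:ℝ) ≤ ‖(WithLp.equiv 2 (Fin N → ℂ)).symm (B *ᵥ x)‖ := norm_nonneg _
    nlinarith
  · intro hpos
    rcases Nat.eq_zero_or_pos k with hk | hk
    · subst hk
      have : B = 0 := Subsingleton.elim _ _
      rw [this, norm_zero]; norm_num
    · haveI : Nonempty (Fin k) := ⟨⟨0, hk⟩⟩
      set L : EuclideanSpace ℂ (Fin k) →L[ℂ] EuclideanSpace ℂ (Fin N) :=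
        (Matrix.toEuclideanLin.trans LinearMap.toContinuousLinearMap) B with hL
      have hnorm : ‖B‖ = ‖L‖ := Matrix.l2_opNorm_def B
      have hLapp : ∀ y : EuclideanSpace ℂ (Fin k),
          L y = (WithLp.equiv 2 (Fin N → ℂ)).symm (B *ᵥ (WithLp.equiv 2 (Fin k → ℂ)) y) :=
        fun _ => rfl
      obtain ⟨z, hz⟩ := exists_norm_eq (EuclideanSpace ℂ (Fin k)) (zero_le_one)
      have hsph : (Metric.sphere (0 : EuclideanSpace ℂ (Fin k)) 1).Nonempty :=
        ⟨z, by simpa using hz⟩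
      obtain ⟨w, hw, hwmax⟩ := (isCompact_sphere (0 : EuclideanSpace ℂ (Fin k)) 1).exists_isMaxOn
        hsph (L.continuous.norm.continuousOn)
      have hw1 : ‖w‖ = 1 := by simpa using hw
      have hwin : ‖L w‖ < 1 := by
        have hwne : (WithLp.equiv 2 (Fin k → ℂ)) w ≠ 0 := by
          intro hcon
          have hw0 : w = 0 := by
            simpa using congrArg (WithLp.equiv 2 (Fin k → ℂ)).symm hcon
          rw [hw0] at hw1; simp at hw1
        have hp := hpos.dotProduct_mulVec_pos (x := (WithLp.equiv 2 (Fin k → ℂ)) w) hwne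
        rw [aux_key B M h, Complex.zero_lt_real] at hp
        have hid : (WithLp.equiv 2 (Fin k → ℂ)).symm ((WithLp.equiv 2 (Fin k → ℂ)) w) = w :=
          (WithLp.equiv 2 (Fin k → ℂ)).symm_apply_apply w
        rw [hid, hw1] at hp
        have hLw : ‖L w‖
            = ‖(WithLp.equiv 2 (Fin N → ℂ)).symm (B *ᵥ (WithLp.equiv 2 (Fin k → ℂ)) w)‖ :=
          congrArg norm (hLapp w)
        rw [hLw]
        nlinarith [norm_nonneg ((WithLp.equiv 2 (Fin N → ℂ)).symm (B *ᵥ (WithLp.equiv 2 (Fin k → ℂ)) w))]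
      have hLle : ‖L‖ ≤ ‖L w‖ := by
        refine ContinuousLinearMap.opNorm_le_bound L (norm_nonneg _) (fun x => ?_)
        rcases eq_or_ne x 0 with rfl | hx
        · simp
        · have hnx : 0 < ‖x‖ := norm_pos_iff.mpr hx
          have hu1 : ‖((‖x‖⁻¹ : ℝ) : ℂ) • x‖ = 1 := by
            rw [norm_smul]
            simp [abs_of_nonneg (inv_nonneg.mpr (norm_nonneg x)),
              inv_mul_cancel₀ hnx.ne']
          have humem : ((‖x‖⁻¹ : ℝ) : ℂ) • x ∈ Metric.sphere (0 : EuclideanSpace ℂ (Fin k)) 1 := by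
            simpa using hu1
          have hLu : ‖L (((‖x‖⁻¹ : ℝ) : ℂ) • x)‖ ≤ ‖L w‖ := hwmax humem
          have hx' : L x = ((‖x‖ : ℝ) : ℂ) • L (((‖x‖⁻¹ : ℝ) : ℂ) • x) := by
            rw [_root_.map_smul, smul_smul]
            norm_cast
            rw [mul_inv_cancel₀ hnx.ne', one_smul]
          rw [hx', norm_smul]
          have hnr : ‖((‖x‖ : ℝ) : ℂ)‖ = ‖x‖ := by
            simp [abs_of_nonneg (norm_nonneg x)]
          rw [hnr, mul_comm]
          exact mul_le_mul_of_nonneg_right hLu (norm_nonneg _)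
      rw [hnorm]
      exact lt_of_le_of_lt hLle hwin

/-- For `U_F ∈ ℂ^{N×k}` with orthonormal columns and `D` a diagonal
0/1 matrix, `‖(I - D) * U_F‖ < 1` iff `U_Fᴴ * D * U_F` is positive definite. -/
theorem opNorm_lt_one_iff_posDef {N k : ℕ}
    (U : Matrix (Fin N) (Fin k) ℂ) (hU : Uᴴ * U = 1)
    (d : Fin N → ℂ) (hd : ∀ i, d i = 0 ∨ d i = 1) :
    ‖((1 : Matrix (Fin N) (Fin N) ℂ) - Matrix.diagonal d) * U‖ < 1 ↔
      (Uᴴ * Matrix.diagonal d * U).PosDef := by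
  have hdstar : star d = d := funext fun i => by rcases hd i with h | h <;> simp [h]
  have hDH : (Matrix.diagonal d)ᴴ = Matrix.diagonal d := by
    rw [diagonal_conjTranspose, hdstar]
  have hdd : (fun i => d i * d i) = d := funext fun i => by
    rcases hd i with h | h <;> simp [h]
  have hDD : Matrix.diagonal d * Matrix.diagonal d = Matrix.diagonal d := by
    rw [diagonal_mul_diagonal, hdd]
  have h1 : ((1 : Matrix (Fin N) (Fin N) ℂ) - Matrix.diagonal d)
      * ((1 : Matrix (Fin N) (Fin N) ℂ) - Matrix.diagonal d)
      = (1 : Matrix (Fin N) (Fin N) ℂ) - Matrix.diagonal d := by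
    rw [Matrix.mul_sub, Matrix.mul_one, Matrix.sub_mul, Matrix.one_mul, hDD]
    abel
  have hBB : (((1 : Matrix (Fin N) (Fin N) ℂ) - Matrix.diagonal d) * U)ᴴ
      * (((1 : Matrix (Fin N) (Fin N) ℂ) - Matrix.diagonal d) * U)
      = 1 - Uᴴ * Matrix.diagonal d * U := by
    calc (((1 : Matrix (Fin N) (Fin N) ℂ) - Matrix.diagonal d) * U)ᴴ
        * (((1 : Matrix (Fin N) (Fin N) ℂ) - Matrix.diagonal d) * U)
        = Uᴴ * ((1 - Matrix.diagonal d) * ((1 - Matrix.diagonal d) * U)) := by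
          rw [conjTranspose_mul, conjTranspose_sub, conjTranspose_one, hDH, Matrix.mul_assoc]
      _ = Uᴴ * ((1 - Matrix.diagonal d) * (1 - Matrix.diagonal d) * U) := by
          rw [Matrix.mul_assoc]
      _ = Uᴴ * ((1 - Matrix.diagonal d) * U) := by rw [h1]
      _ = Uᴴ * U - Uᴴ * (Matrix.diagonal d * U) := by
          rw [Matrix.sub_mul, Matrix.one_mul, Matrix.mul_sub]
      _ = 1 - Uᴴ * Matrix.diagonal d * U := by rw [hU, Matrix.mul_assoc]
  exact aux_main _ _ hBB
end

section
/- Let M be Hermitian positive definite with eigenvalues in [ν, δ], 0 < ν ≤ δ, let q = ‖I − μM‖² and assume 0 < μ < 2/δ. Consider nonnegative reals satisfying E[n+1] ≤ q·E[n] + μ²c for a constant c ≥ 0. Then limsup_{n→∞} E[n] ≤ μ²c/(1−q) ≤ μc/(2ν − μδ²) whenever μ < 2ν/δ². -/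
open Matrix
open scoped Matrix.Norms.L2Operator ComplexOrder

set_option maxHeartbeats 1000000 in
lemma diag_l2_norm_le {n : Type*} [Fintype n] [DecidableEq n] (d : n → ℂ) (r : ℝ)
    (hr : 0 ≤ r) (hd : ∀ i, ‖d i‖ ≤ r) : ‖Matrix.diagonal d‖ ≤ r := by
  rw [Matrix.l2_opNorm_def]
  apply ContinuousLinearMap.opNorm_le_bound _ hr
  intro x
  have hx : 0 ≤ ‖x‖ := norm_nonneg x
  have key : ‖(Matrix.toEuclideanLin (Matrix.diagonal d) : _ →ₗ[ℂ] _) x‖ ^ 2 ≤ (r * ‖x‖) ^ 2 := by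
    rw [EuclideanSpace.norm_eq, Real.sq_sqrt (by positivity)]
    have hxn : ‖x‖ ^ 2 = ∑ i, ‖x i‖ ^ 2 := by
      rw [EuclideanSpace.norm_eq, Real.sq_sqrt (by positivity)]
    have : ∀ i, ‖(Matrix.toEuclideanLin (Matrix.diagonal d) : _ →ₗ[ℂ] _) x i‖ ^ 2
        ≤ r ^ 2 * ‖x i‖ ^ 2 := by
      intro i
      have : (Matrix.toEuclideanLin (Matrix.diagonal d) : _ →ₗ[ℂ] _) x i
          = d i * x i := by
        simp [Matrix.toEuclideanLin_apply, Matrix.mulVec_diagonal]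
      rw [this, norm_mul, mul_pow]
      have := hd i
      have h2 : ‖d i‖ ^ 2 ≤ r ^ 2 := by nlinarith [norm_nonneg (d i)]
      nlinarith [norm_nonneg (x i), sq_nonneg (‖x i‖)]
    calc ∑ i, ‖(Matrix.toEuclideanLin (Matrix.diagonal d) : _ →ₗ[ℂ] _) x i‖ ^ 2
        ≤ ∑ i, r ^ 2 * ‖x i‖ ^ 2 := Finset.sum_le_sum fun i _ => this i
      _ = r ^ 2 * ∑ i, ‖x i‖ ^ 2 := by rw [Finset.mul_sum]
      _ = (r * ‖x‖) ^ 2 := by rw [← hxn]; ring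
  have h1 : 0 ≤ r * ‖x‖ := by positivity
  have heq : ‖((Matrix.toEuclideanLin ≪≫ₗ LinearMap.toContinuousLinearMap) (Matrix.diagonal d)) x‖
      = ‖(Matrix.toEuclideanLin (Matrix.diagonal d) : _ →ₗ[ℂ] _) x‖ := rfl
  rw [heq]
  nlinarith [norm_nonneg ((Matrix.toEuclideanLin (Matrix.diagonal d) : _ →ₗ[ℂ] _) x)]


set_option maxHeartbeats 1000000 in
/-- With `M` Hermitian positive definite with smallest/largest eigenvalue
`ν`/`δ`, `q = ‖I - μM‖²`, and a nonnegative sequence with `E[n+1] ≤ q E[n] + μ²c`,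
for `0 < μ < 2ν/δ²` one has `limsup E ≤ μ²c/(1-q) ≤ μc/(2ν - μδ²)`. -/
theorem lms_mse_limsup_bound {k : ℕ}
    (M : Matrix (Fin k) (Fin k) ℂ) (hM : M.PosDef)
    (ν δ : ℝ)
    (hν : IsLeast (Set.range hM.1.eigenvalues) ν)
    (hδ : IsGreatest (Set.range hM.1.eigenvalues) δ)
    (hν0 : 0 < ν)
    (μ c : ℝ) (hc : 0 ≤ c) (hμ0 : 0 < μ) (hμ : μ < 2 * ν / δ ^ 2)
    (q : ℝ) (hq : q = ‖(1 : Matrix (Fin k) (Fin k) ℂ) - (μ : ℂ) • M‖ ^ 2)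
    (E : ℕ → ℝ) (hE0 : ∀ n, 0 ≤ E n)
    (hrec : ∀ n, E (n + 1) ≤ q * E n + μ ^ 2 * c) :
    Filter.limsup E Filter.atTop ≤ μ ^ 2 * c / (1 - q) ∧
      μ ^ 2 * c / (1 - q) ≤ μ * c / (2 * ν - μ * δ ^ 2) := by
  haveI : Nonempty (Fin k) := by
    obtain ⟨i, -⟩ := hν.1
    exact ⟨i⟩
  set lam := hM.1.eigenvalues with hlam
  have hδν : ν ≤ δ := hδ.2 hν.1
  have hδ0 : 0 < δ := lt_of_lt_of_le hν0 hδν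
  have hμδ : μ * δ ^ 2 < 2 * ν := by
    rw [lt_div_iff₀ (by positivity)] at hμ
    linarith
  -- eigenvalue bounds
  have hlo : ∀ i, ν ≤ lam i := fun i => hν.2 ⟨i, rfl⟩
  have hhi : ∀ i, lam i ≤ δ := fun i => hδ.2 ⟨i, rfl⟩
  -- the scalar bound
  set s : ℝ := 1 - 2 * μ * ν + μ ^ 2 * δ ^ 2 with hs
  have hs0 : 0 ≤ s := by
    have a2 : 0 ≤ μ ^ 2 * ((δ - ν) * (δ + ν)) :=
      mul_nonneg (sq_nonneg μ) (mul_nonneg (by linarith) (by linarith))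
    nlinarith [sq_nonneg (1 - μ * ν)]
  set r : ℝ := Real.sqrt s with hr
  -- the diagonal entries
  set e : Fin k → ℂ := fun i => ((1 - μ * lam i : ℝ) : ℂ) with he
  have hed : ∀ i, ‖e i‖ ≤ r := by
    intro i
    have h1 : ‖e i‖ = |1 - μ * lam i| := Complex.norm_real _
    rw [h1, hr]
    apply Real.abs_le_sqrt
    have h2 := hlo i
    have h3 := hhi i
    have a1 : 0 ≤ μ * (lam i - ν) := mul_nonneg hμ0.le (by linarith)
    have a2 : 0 ≤ μ ^ 2 * ((δ - lam i) * (δ + lam i)) :=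
      mul_nonneg (sq_nonneg μ) (mul_nonneg (by linarith) (by linarith))
    nlinarith [a1, a2]
  -- conjugation identity
  set U := hM.1.eigenvectorUnitary with hU
  have hA : (1 : Matrix (Fin k) (Fin k) ℂ) - (μ : ℂ) • M
      = (U : Matrix (Fin k) (Fin k) ℂ) * Matrix.diagonal e * star (U : Matrix (Fin k) (Fin k) ℂ) := by
    have hdiag : Matrix.diagonal e
        = 1 - (μ : ℂ) • Matrix.diagonal (RCLike.ofReal ∘ lam) := by
      ext i j
      rcases eq_or_ne i j with h | h
      · subst h
        simp only [Matrix.diagonal_apply_eq, Matrix.sub_apply, Matrix.one_apply_eq,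
          Matrix.smul_apply, he, smul_eq_mul, Function.comp_apply]
        push_cast
        rfl
      · simp [Matrix.diagonal_apply_ne _ h, Matrix.one_apply_ne h]
    have hUs : (U : Matrix (Fin k) (Fin k) ℂ) * star (U : Matrix (Fin k) (Fin k) ℂ) = 1 :=
      Unitary.coe_mul_star_self U
    rw [hdiag, Matrix.mul_sub, Matrix.sub_mul, mul_one, hUs, mul_smul_comm, smul_mul_assoc,
      hM.1.spectral_theorem, Unitary.conjStarAlgAut_apply]
  have hnormA : ‖(1 : Matrix (Fin k) (Fin k) ℂ) - (μ : ℂ) • M‖ ≤ r := by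
    rw [hA, mul_assoc, CStarRing.norm_coe_unitary_mul, ← Unitary.coe_star,
      CStarRing.norm_mul_coe_unitary]
    exact diag_l2_norm_le e r (Real.sqrt_nonneg _) hed
  have hq0 : 0 ≤ q := hq ▸ sq_nonneg _
  have hqs : q ≤ s := by
    rw [hq]
    calc ‖(1 : Matrix (Fin k) (Fin k) ℂ) - (μ : ℂ) • M‖ ^ 2 ≤ r ^ 2 :=
          pow_le_pow_left₀ (norm_nonneg _) hnormA 2
      _ = s := Real.sq_sqrt hs0
  have hkey : μ * (2 * ν - μ * δ ^ 2) ≤ 1 - q := by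
    have : 1 - s = μ * (2 * ν - μ * δ ^ 2) := by ring
    linarith
  have h1q : 0 < 1 - q := lt_of_lt_of_le (by nlinarith) hkey
  set B : ℝ := μ ^ 2 * c / (1 - q) with hB
  have hBq : B * (1 - q) = μ ^ 2 * c := div_mul_cancel₀ _ h1q.ne'
  have claim : ∀ n, E n ≤ q ^ n * E 0 + B * (1 - q ^ n) := by
    intro n
    induction n with
    | zero => simp
    | succ n ih =>
      calc E (n + 1) ≤ q * E n + μ ^ 2 * c := hrec n
        _ ≤ q * (q ^ n * E 0 + B * (1 - q ^ n)) + μ ^ 2 * c :=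
            add_le_add_left (mul_le_mul_of_nonneg_left ih hq0) _
        _ = q ^ (n + 1) * E 0 + B * (1 - q ^ (n + 1)) := by
            rw [← hBq]; ring
  have hq1 : |q| < 1 := by rw [abs_of_nonneg hq0]; linarith
  have T := tendsto_pow_atTop_nhds_zero_of_abs_lt_one hq1
  have hlim : Filter.Tendsto (fun n => q ^ n * E 0 + B * (1 - q ^ n))
      Filter.atTop (nhds B) := by
    have h2 := (T.mul_const (E 0)).add ((T.const_mul B).const_sub B)
    have h3 : (0 : ℝ) * E 0 + (B - B * 0) = B := by ring
    rw [h3] at h2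
    refine h2.congr fun n => by ring
  constructor
  · have hle : Filter.limsup E Filter.atTop
        ≤ Filter.limsup (fun n => q ^ n * E 0 + B * (1 - q ^ n)) Filter.atTop := by
      refine Filter.limsup_le_limsup (Filter.Eventually.of_forall claim) ?_ ?_
      · exact Filter.isCoboundedUnder_le_of_eventually_le Filter.atTop
          (x := 0) (Filter.Eventually.of_forall hE0)
      · exact hlim.isBoundedUnder_le
    rw [hlim.limsup_eq] at hle
    exact hle
  · have hs2 : 0 < 2 * ν - μ * δ ^ 2 := by linarith
    rw [div_le_div_iff₀ h1q hs2]
    nlinarith [mul_le_mul_of_nonneg_left hkey (mul_nonneg hμ0.le hc)]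
end
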